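/- (Lemma 2.) Let n ≥ 0 and let P be a reverse-positive path whose total sum is −n. Then there exist excursions E_1, …, E_n such that P = E_1 ++ [−1] ++ E_2 ++ [−1] ++ ⋯ ++ E_n ++ [−1] (the empty concatenation, i.e. the empty path, when n = 0), and this factorization is unique; conversely, any path of this form is a reverse-positive path with total sum −n. -/

import Mathlib

/-- A path is a finite list of integers all of whose entries are ≥ -1; entries ≥ 0 are
up steps and the entry -1 is the down step. -/
def IsPath (P : List ℤ) : Prop := ∀ s ∈ P, (-1 : ℤ) ≤ s

/-- A nonnegative path: a path all of whose prefix sums are ≥ 0. -/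
def NonnegPath (P : List ℤ) : Prop := IsPath P ∧ ∀ i : ℕ, 0 ≤ (P.take i).sum

/-- A positive path: a path all of whose nonempty prefix sums are > 0. -/
def PositivePath (P : List ℤ) : Prop :=
  IsPath P ∧ ∀ i : ℕ, 1 ≤ i → i ≤ P.length → 0 < (P.take i).sum

/-- An excursion: a nonnegative path with total sum 0. -/
def Excursion (P : List ℤ) : Prop := NonnegPath P ∧ P.sum = 0

/-- A reverse-positive path: a path all of whose nonempty suffix sums are < 0. -/
def RevPositivePath (P : List ℤ) : Prop :=
  IsPath P ∧ ∀ i : ℕ, i < P.length → (P.drop i).sum < 0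

lemma flatten_sum_aux (L : List (List ℤ)) (h : ∀ E ∈ L, Excursion E) :
    (L.map (fun E => E ++ [(-1:ℤ)])).flatten.sum = -(L.length : ℤ) := by
  induction L with
  | nil => simp
  | cons E t ih =>
    simp only [List.map_cons, List.flatten_cons, List.sum_append, List.length_cons]
    rw [ih (fun E hE => h E (List.mem_cons_of_mem _ hE)), (h E (List.mem_cons_self)).2]
    push_cast
    simp

lemma flatten_revpos_aux (L : List (List ℤ)) (h : ∀ E ∈ L, Excursion E) :
    RevPositivePath (L.map (fun E => E ++ [(-1:ℤ)])).flatten := by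
  induction L with
  | nil => exact ⟨by simp [IsPath], by simp⟩
  | cons E t ih =>
    have hE := h E (List.mem_cons_self)
    have ht : ∀ E ∈ t, Excursion E := fun E hE => h E (List.mem_cons_of_mem _ hE)
    have ih' := ih ht
    set Q := (t.map (fun E => E ++ [(-1:ℤ)])).flatten with hQ
    have hQsum : Q.sum = -(t.length : ℤ) := flatten_sum_aux t ht
    constructor
    · intro s hs
      simp only [List.map_cons, List.flatten_cons, List.mem_append] at hs
      rcases hs with (hs | hs) | hs
      · exact hE.1.1 s hs
      · simp at hs; omega
      · exact ih'.1 s hs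
    · intro i hi
      simp only [List.map_cons, List.flatten_cons] at hi ⊢
      rw [List.append_assoc]
      by_cases hc : i ≤ E.length
      · rw [List.drop_append_of_le_length hc]
        have h1 : (E.drop i).sum = -(E.take i).sum := by
          have := List.sum_take_add_sum_drop E i
          rw [hE.2] at this; linarith
        have h2 : 0 ≤ (E.take i).sum := hE.1.2 i
        have hQ' : ([(-1:ℤ)] ++ Q).sum = -1 + -(t.length:ℤ) := by
          rw [List.sum_append, hQsum]; simp
        simp only [List.sum_append, h1]
        have h5 : ([(-1:ℤ)].sum + (List.map (fun E => E ++ [(-1:ℤ)]) t).flatten.sum)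
            = -1 + -(t.length:ℤ) := by
          rw [show (List.map (fun E => E ++ [(-1:ℤ)]) t).flatten = Q from rfl, hQsum]; simp
        rw [h5]
        have : (0:ℤ) ≤ t.length := by positivity
        linarith
      · push_neg at hc
        have h3 : i = (E.length + 1) + (i - (E.length + 1)) := by omega
        rw [← List.append_assoc, h3, ← List.drop_drop]
        have h4 : ((E ++ [(-1:ℤ)]) ++ Q).drop (E.length + 1) = Q := by
          rw [List.drop_append_of_le_length (by simp)]
          simp
        rw [h4]
        apply ih'.2
        have hlen : (E ++ [(-1:ℤ)] ++ (List.map (fun E => E ++ [(-1:ℤ)]) t).flatten).length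
            = E.length + 1 + Q.length := by simp [hQ]; omega
        rw [hlen] at hi
        omega

lemma decomp_exists (n : ℕ) : ∀ P : List ℤ, RevPositivePath P → P.sum = -(n:ℤ) →
    ∃ L : List (List ℤ), L.length = n ∧ (∀ E ∈ L, Excursion E) ∧
      (L.map (fun E => E ++ [(-1:ℤ)])).flatten = P := by
  induction n with
  | zero =>
    intro P hP hs
    have hP0 : P = [] := by
      cases P with
      | nil => rfl
      | cons a t =>
        have := hP.2 0 (by simp)
        simp only [List.drop_zero] at this
        rw [hs] at this
        norm_num at this
    exact ⟨[], by simp [hP0]⟩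
  | succ n ih =>
    intro P hP hs
    have hex : ∃ i, (P.take i).sum < 0 := by
      refine ⟨P.length, ?_⟩
      rw [List.take_length, hs]
      push_cast
      linarith [Nat.cast_nonneg (α := ℤ) n]
    classical
    set k := Nat.find hex with hk
    have hks : (P.take k).sum < 0 := Nat.find_spec hex
    have hmin : ∀ j < k, 0 ≤ (P.take j).sum := by
      intro j hj
      have := Nat.find_min hex hj
      omega
    have hk1 : 1 ≤ k := by
      by_contra hc
      push_neg at hc
      interval_cases k
      simp at hks
    have hklen : k ≤ P.length := by
      by_contra hc
      push_neg at hc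
      have : P.length < k := hc
      have := Nat.find_min hex this
      rw [List.take_length] at this
      rw [hs] at this
      push_cast at this
      have : (0:ℤ) ≤ n := Nat.cast_nonneg n
      omega
    obtain ⟨m, hm⟩ : ∃ m, k = m + 1 := ⟨k - 1, by omega⟩
    have hmlt : m < P.length := by omega
    have hstep : (P.take (m+1)).sum = (P.take m).sum + P[m] := List.sum_take_succ P m hmlt
    have hPm : (-1:ℤ) ≤ P[m] := hP.1 _ (List.getElem_mem hmlt)
    have htm : 0 ≤ (P.take m).sum := hmin m (by omega)
    have hPm1 : P[m] = -1 ∧ (P.take m).sum = 0 := by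
      rw [hm] at hks
      constructor <;> omega
    -- decomposition
    have hdec : P = P.take m ++ [(-1:ℤ)] ++ P.drop (m+1) := by
      conv_lhs => rw [← List.take_append_drop m P]
      rw [List.drop_eq_getElem_cons hmlt, hPm1.1, List.append_assoc]
      rfl
    have hEexc : Excursion (P.take m) := by
      refine ⟨⟨fun s hs => hP.1 s (List.mem_of_mem_take hs), ?_⟩, hPm1.2⟩
      intro i
      rw [List.take_take]
      exact hmin _ (by omega)
    set R := P.drop (m+1) with hR
    have hRrev : RevPositivePath R := by
      constructor
      · exact fun s hs => hP.1 s (List.mem_of_mem_drop hs)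
      · intro i hi
        rw [hR, List.drop_drop]
        apply hP.2
        simp [hR] at hi
        omega
    have hRsum : R.sum = -(n:ℤ) := by
      have h1 := List.sum_take_add_sum_drop P (m+1)
      rw [← hm] at h1
      rw [hm] at hks hmin
      have h2 : (P.take (m+1)).sum = -1 := by omega
      rw [hs, hm] at h1
      rw [hR, hm] at *
      push_cast at h1 ⊢
      omega
    obtain ⟨L', hL'len, hL'exc, hL'fl⟩ := ih R hRrev hRsum
    refine ⟨P.take m :: L', by simp [hL'len], ?_, ?_⟩
    · intro E hE
      rcases List.mem_cons.1 hE with h | h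
      · rw [h]; exact hEexc
      · exact hL'exc E h
    · simp only [List.map_cons, List.flatten_cons, hL'fl]
      exact hdec.symm

lemma decomp_unique : ∀ (L₁ L₂ : List (List ℤ)), (∀ E ∈ L₁, Excursion E) →
    (∀ E ∈ L₂, Excursion E) →
    (L₁.map (fun E => E ++ [(-1:ℤ)])).flatten = (L₂.map (fun E => E ++ [(-1:ℤ)])).flatten →
    L₁ = L₂ := by
  have key : ∀ (E E' : List ℤ) (Q Q' : List ℤ), Excursion E → Excursion E' →
      (E ++ [(-1:ℤ)]) ++ Q = (E' ++ [(-1:ℤ)]) ++ Q' → E.length < E'.length → False := by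
    intro E E' Q Q' hE hE' heq hlt
    have h1 : ((E ++ [(-1:ℤ)]) ++ Q).take (E.length + 1) = E ++ [(-1:ℤ)] := by
      rw [List.take_append_of_le_length (by simp)]
      simp
    have h2 : ((E' ++ [(-1:ℤ)]) ++ Q').take (E.length + 1) = E'.take (E.length + 1) := by
      rw [List.take_append_of_le_length (by simp; omega),
        List.take_append_of_le_length (by omega)]
    rw [heq, h2] at h1
    have h3 : 0 ≤ (E'.take (E.length + 1)).sum := hE'.1.2 _
    rw [h1] at h3
    simp only [List.sum_append, List.sum_cons, List.sum_nil, hE.2] at h3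
    linarith
  intro L₁
  induction L₁ with
  | nil =>
    intro L₂ _ _ heq
    cases L₂ with
    | nil => rfl
    | cons E t => simp at heq
  | cons E t ih =>
    intro L₂ h₁ h₂ heq
    cases L₂ with
    | nil => simp at heq
    | cons E' t' =>
      simp only [List.map_cons, List.flatten_cons, ← List.append_assoc] at heq
      have hE : Excursion E := h₁ E (List.mem_cons_self)
      have hE' : Excursion E' := h₂ E' (List.mem_cons_self)
      have hlen : E.length = E'.length := by
        rcases lt_trichotomy E.length E'.length with h | h | h
        · exact absurd (key E E' _ _ hE hE' heq h) (by simp)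
        · exact h
        · exact absurd (key E' E _ _ hE' hE heq.symm h) (by simp)
      obtain ⟨h5, hQ⟩ := List.append_inj heq (by simp [hlen])
      have hEE' : E = E' := by
        have h6 := List.append_inj h5 (by omega)
        exact h6.1
      subst hEE'
      have htEq := ih t' (fun E hE => h₁ E (List.mem_cons_of_mem _ hE))
        (fun E hE => h₂ E (List.mem_cons_of_mem _ hE)) hQ
      rw [htEq]

/-- (Lemma 2.) For `n ≥ 0`, a path `P` is a reverse-positive path with total sum `-n`
if and only if it can be written, in exactly one way, as
`E₁ ++ [-1] ++ E₂ ++ [-1] ++ ⋯ ++ Eₙ ++ [-1]` with each `Eᵢ` an excursion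
(the empty path when `n = 0`). -/
theorem geode_stmt13 (n : ℕ) (P : List ℤ) :
    (RevPositivePath P ∧ P.sum = -(n : ℤ)) ↔
      ∃! L : List (List ℤ), L.length = n ∧ (∀ E ∈ L, Excursion E) ∧
        (L.map (fun E => E ++ [(-1 : ℤ)])).flatten = P := by
  constructor
  · rintro ⟨hP, hs⟩
    obtain ⟨L, hlen, hex, hfl⟩ := decomp_exists n P hP hs
    refine ⟨L, ⟨hlen, hex, hfl⟩, ?_⟩
    rintro L' ⟨_, hex', hfl'⟩
    exact decomp_unique L' L hex' hex (hfl'.trans hfl.symm)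
  · rintro ⟨L, ⟨hlen, hex, hfl⟩, -⟩
    subst hfl
    exact ⟨flatten_revpos_aux L hex, by rw [flatten_sum_aux L hex, hlen]⟩
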